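/- Suppose: (1) 2·B(α_a, α_{a'}) = B(α_a, α_a)·b(a,a') for all a, a' ∈ Π; (2) 2·B(α_a, λ_i) = −B(α_a, α_a)·b(a,i) for all a ∈ Π, i ∈ I; (3) 2·B(α_a, λ_i) = −φ(i,i)·b(i,a) for all a ∈ Π, i ∈ I; (4) φ(i,j) + φ(j,i) = φ(i,i)·b(i,j) for all i, j ∈ I; (5) for every i ∈ I with φ(i,i) = 0 one has b(i,i) = 2 and b(i,p) = 0 for all p ∈ P with p ≠ i; and the strong exponential condition: for every i ∈ I, if φ(i,i) ≤ 0 then λ_i = 0 and φ(i,j) + φ(j,i) = 0 for all j ∈ I. Then the matrix b is symmetrizable by positive symmetrizers: there exist rational numbers d_p > 0 (p ∈ P) such that d_p·b(p,q) = d_q·b(q,p) for all p, q ∈ P. -/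
import Mathlib


/-- Under conditions (1)-(5) and the strong exponential condition,
the extended Cartan matrix `b` is symmetrizable by positive symmetrizers. -/
theorem extended_cartan_matrix_symmetrizable
    {Γ I V : Type*} [Fintype Γ] [Fintype I]
    [AddCommGroup V] [Module ℚ V]
    (B : V →ₗ[ℚ] V →ₗ[ℚ] ℚ) (hBsymm : ∀ v w : V, B v w = B w v)
    (α : Γ → V) (hα : ∀ a : Γ, 0 < B (α a) (α a))
    (lam : I → V)
    (φ : I → I → ℚ) (hφsymm : ∀ i j : I, φ i j = φ j i)
    (b : Γ ⊕ I → Γ ⊕ I → ℚ)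
    (h1 : ∀ a a' : Γ, 2 * B (α a) (α a') = B (α a) (α a) * b (Sum.inl a) (Sum.inl a'))
    (h2 : ∀ (a : Γ) (i : I), 2 * B (α a) (lam i) = -(B (α a) (α a) * b (Sum.inl a) (Sum.inr i)))
    (h3 : ∀ (a : Γ) (i : I), 2 * B (α a) (lam i) = -(φ i i * b (Sum.inr i) (Sum.inl a)))
    (h4 : ∀ i j : I, φ i j + φ j i = φ i i * b (Sum.inr i) (Sum.inr j))
    (h5 : ∀ i : I, φ i i = 0 → b (Sum.inr i) (Sum.inr i) = 2 ∧
      ∀ p : Γ ⊕ I, p ≠ Sum.inr i → b (Sum.inr i) p = 0)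
    (hstrong : ∀ i : I, φ i i ≤ 0 → lam i = 0 ∧ ∀ j : I, φ i j + φ j i = 0) :
    ∃ d : Γ ⊕ I → ℚ, (∀ p, 0 < d p) ∧ ∀ p q, d p * b p q = d q * b q p := by
  -- key: if φ i i ≤ 0 then row i of b vanishes off the diagonal
  have key : ∀ i : I, φ i i ≤ 0 → ∀ p : Γ ⊕ I, p ≠ Sum.inr i → b (Sum.inr i) p = 0 := by
    intro i hi p hp
    rcases eq_or_lt_of_le hi with h0 | hneg
    · exact (h5 i h0).2 p hp
    · have hne : φ i i ≠ 0 := ne_of_lt hneg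
      have hlam : lam i = 0 := (hstrong i hi).1
      cases p with
      | inl a =>
          have := h3 a i
          rw [hlam] at this
          simp only [map_zero, mul_zero] at this
          have : φ i i * b (Sum.inr i) (Sum.inl a) = 0 := by linarith
          exact (mul_eq_zero.mp this).resolve_left hne
      | inr j =>
          have hsum := (hstrong i hi).2 j
          have := h4 i j
          have : φ i i * b (Sum.inr i) (Sum.inr j) = 0 := by linarith
          exact (mul_eq_zero.mp this).resolve_left hne
  refine ⟨Sum.elim (fun a => B (α a) (α a)) (fun i => if 0 < φ i i then φ i i else 1),
    ?_, ?_⟩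
  · rintro (a | i)
    · exact hα a
    · simp only [Sum.elim_inr]
      split
      · assumption
      · exact one_pos
  · rintro (a | i) (a' | j)
    · -- inl / inl
      have e1 := h1 a a'
      have e2 := h1 a' a
      have e3 := hBsymm (α a) (α a')
      simp only [Sum.elim_inl]
      linarith
    · -- inl / inr
      simp only [Sum.elim_inl, Sum.elim_inr]
      have e2 := h2 a j
      by_cases hj : 0 < φ j j
      · rw [if_pos hj]
        have e3 := h3 a j
        linarith
      · rw [if_neg hj]
        push_neg at hj
        have hlam : lam j = 0 := (hstrong j hj).1
        rw [hlam] at e2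
        simp only [map_zero, mul_zero] at e2
        have hb : b (Sum.inr j) (Sum.inl a) = 0 := key j hj _ (by simp)
        rw [hb]
        nlinarith [e2]
    · -- inr / inl
      simp only [Sum.elim_inl, Sum.elim_inr]
      have e2 := h2 a' i
      by_cases hi : 0 < φ i i
      · rw [if_pos hi]
        have e3 := h3 a' i
        linarith
      · rw [if_neg hi]
        push_neg at hi
        have hlam : lam i = 0 := (hstrong i hi).1
        rw [hlam] at e2
        simp only [map_zero, mul_zero] at e2
        have hb : b (Sum.inr i) (Sum.inl a') = 0 := key i hi _ (by simp)
        rw [hb]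
        nlinarith [e2]
    · -- inr / inr
      simp only [Sum.elim_inr]
      by_cases hij : i = j
      · subst hij; rfl
      have e1 := h4 i j
      have e2 := h4 j i
      have e3 := hφsymm i j
      by_cases hi : 0 < φ i i <;> by_cases hj : 0 < φ j j
      · rw [if_pos hi, if_pos hj]; linarith
      · rw [if_pos hi, if_neg hj]
        push_neg at hj
        have hbji : b (Sum.inr j) (Sum.inr i) = 0 :=
          key j hj _ (fun h => hij (Sum.inr.inj h))
        have hsum := (hstrong j hj).2 i
        have : φ i i * b (Sum.inr i) (Sum.inr j) = 0 := by linarith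
        have hbij : b (Sum.inr i) (Sum.inr j) = 0 :=
          (mul_eq_zero.mp this).resolve_left (ne_of_gt hi)
        rw [hbij, hbji]; ring
      · rw [if_neg hi, if_pos hj]
        push_neg at hi
        have hbij : b (Sum.inr i) (Sum.inr j) = 0 :=
          key i hi _ (fun h => hij (Sum.inr.inj h).symm)
        have hsum := (hstrong i hi).2 j
        have : φ j j * b (Sum.inr j) (Sum.inr i) = 0 := by linarith
        have hbji : b (Sum.inr j) (Sum.inr i) = 0 :=
          (mul_eq_zero.mp this).resolve_left (ne_of_gt hj)
        rw [hbij, hbji]; ring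
      · rw [if_neg hi, if_neg hj]
        push_neg at hi hj
        rw [key i hi _ (fun h => hij (Sum.inr.inj h).symm),
          key j hj _ (fun h => hij (Sum.inr.inj h))]
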